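/- Let n ≥ 1, a < b, and let B_0,…,B_n : ℝ → ℝ be n times continuously differentiable on [a,b] with Σ_{i=0}^n B_i = 1 on [a,b], and suppose that for each i = 0,…,n: B_i^{(j)}(a) = 0 for 0 ≤ j ≤ i−1, B_i^{(i)}(a) ≠ 0, B_i^{(j)}(b) = 0 for 0 ≤ j ≤ n−i−1, and B_i^{(n−i)}(b) ≠ 0. Then for each i = 0,…,n−1 the function V_i := (B_{i+1}+⋯+B_n)′ satisfies: V_i^{(j)}(a) = 0 for 0 ≤ j ≤ i−1, V_i^{(i)}(a) ≠ 0, V_i^{(j)}(b) = 0 for 0 ≤ j ≤ n−i−2, and V_i^{(n−1−i)}(b) ≠ 0. -/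

import Mathlib

open Set

private lemma iterZero14 {s : Set ℝ} (hs : UniqueDiffOn ℝ s) {x : ℝ} (hx : x ∈ s) (k : ℕ) :
    iteratedDerivWithin k (fun _ : ℝ => (0 : ℝ)) s x = 0 := by
  cases k with
  | zero => simp
  | succ k =>
    rw [iteratedDerivWithin, iteratedFDerivWithin_const_of_ne (by simp) (0 : ℝ) s]
    simp

private lemma iterSum14 {ι : Type*} (u : Finset ι) (f : ι → ℝ → ℝ) {s : Set ℝ}
    (hs : UniqueDiffOn ℝ s) {x : ℝ} (hx : x ∈ s) {k : ℕ}
    (h : ∀ j ∈ u, ContDiffOn ℝ k (f j) s) :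
    iteratedDerivWithin k (fun y => ∑ j ∈ u, f j y) s x
      = ∑ j ∈ u, iteratedDerivWithin k (f j) s x := by
  simp_rw [iteratedDerivWithin, iteratedFDerivWithin_fun_sum_apply hs hx (fun j hj => (h j hj) x hx),
    ContinuousMultilinearMap.sum_apply]

/-- Theorem: a normalised Bernstein-like system `(B 0, …, B n)` relative to `(a,b)`
generates, via `Vᵢ = (B_{i+1} + ⋯ + B_n)'`, a Bernstein-like system of degree `n-1`:
`Vᵢ` vanishes exactly `i` times at `a` and exactly `n-1-i` times at `b`. -/
theorem stmt14 (n : ℕ) (hn : 1 ≤ n) (a b : ℝ) (hab : a < b)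
    (B : Fin (n + 1) → ℝ → ℝ)
    (hsm : ∀ i, ContDiffOn ℝ n (B i) (Set.Icc a b))
    (hnorm : ∀ x ∈ Set.Icc a b, ∑ i, B i x = 1)
    (ha : ∀ i : Fin (n + 1),
      (∀ j < (i : ℕ), iteratedDerivWithin j (B i) (Set.Icc a b) a = 0) ∧
      iteratedDerivWithin (i : ℕ) (B i) (Set.Icc a b) a ≠ 0)
    (hb : ∀ i : Fin (n + 1),
      (∀ j < n - (i : ℕ), iteratedDerivWithin j (B i) (Set.Icc a b) b = 0) ∧
      iteratedDerivWithin (n - (i : ℕ)) (B i) (Set.Icc a b) b ≠ 0) :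
    ∀ i : Fin n, ∀ V : ℝ → ℝ,
      (∀ x : ℝ, V x = derivWithin
        (fun y => ∑ j : Fin (n + 1), if (i : ℕ) < (j : ℕ) then B j y else 0)
        (Set.Icc a b) x) →
      (∀ j < (i : ℕ), iteratedDerivWithin j V (Set.Icc a b) a = 0) ∧
      iteratedDerivWithin (i : ℕ) V (Set.Icc a b) a ≠ 0 ∧
      (∀ j < n - 1 - (i : ℕ), iteratedDerivWithin j V (Set.Icc a b) b = 0) ∧
      iteratedDerivWithin (n - 1 - (i : ℕ)) V (Set.Icc a b) b ≠ 0 := by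
  have hu : UniqueDiffOn ℝ (Set.Icc a b) := uniqueDiffOn_Icc hab
  have hma : a ∈ Set.Icc a b := Set.left_mem_Icc.2 hab.le
  have hmb : b ∈ Set.Icc a b := Set.right_mem_Icc.2 hab.le
  intro i V hV
  have hin : (i : ℕ) < n := i.isLt
  set S : ℝ → ℝ := fun y => ∑ j : Fin (n + 1), if (i : ℕ) < (j : ℕ) then B j y else 0 with hSdef
  set T : ℝ → ℝ := fun y => ∑ j : Fin (n + 1), if (i : ℕ) < (j : ℕ) then 0 else B j y with hTdef
  have hVf : V = derivWithin S (Set.Icc a b) := funext hV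
  have hg : ∀ j : Fin (n + 1), ∀ k : ℕ, k ≤ n →
      ContDiffOn ℝ k (fun y => if (i : ℕ) < (j : ℕ) then B j y else 0) (Set.Icc a b) := by
    intro j k hk
    by_cases h : (i : ℕ) < (j : ℕ)
    · simp only [h, if_true]
      exact (hsm j).of_le (by exact_mod_cast hk)
    · simp only [h, if_false]
      exact contDiffOn_const
  have hg' : ∀ j : Fin (n + 1), ∀ k : ℕ, k ≤ n →
      ContDiffOn ℝ k (fun y => if (i : ℕ) < (j : ℕ) then 0 else B j y) (Set.Icc a b) := by
    intro j k hk
    by_cases h : (i : ℕ) < (j : ℕ)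
    · simp only [h, if_true]
      exact contDiffOn_const
    · simp only [h, if_false]
      exact (hsm j).of_le (by exact_mod_cast hk)
  have key : ∀ k : ℕ, ∀ x ∈ Set.Icc a b, iteratedDerivWithin k V (Set.Icc a b) x
      = iteratedDerivWithin (k + 1) S (Set.Icc a b) x := by
    intro k x hx
    rw [iteratedDerivWithin_succ', hVf]
  have keyS : ∀ k : ℕ, k ≤ n → ∀ x ∈ Set.Icc a b, iteratedDerivWithin k S (Set.Icc a b) x
      = ∑ j : Fin (n + 1),
          if (i : ℕ) < (j : ℕ) then iteratedDerivWithin k (B j) (Set.Icc a b) x else 0 := by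
    intro k hk x hx
    rw [hSdef, iterSum14 Finset.univ _ hu hx (fun j _ => hg j k hk)]
    refine Finset.sum_congr rfl fun j _ => ?_
    by_cases h : (i : ℕ) < (j : ℕ)
    · simp only [h, if_true]
    · simp only [h, if_false]
      exact iterZero14 hu hx k
  have keyT : ∀ k : ℕ, k ≤ n → iteratedDerivWithin k T (Set.Icc a b) b
      = ∑ j : Fin (n + 1),
          if (i : ℕ) < (j : ℕ) then 0 else iteratedDerivWithin k (B j) (Set.Icc a b) b := by
    intro k hk
    rw [hTdef, iterSum14 Finset.univ _ hu hmb (fun j _ => hg' j k hk)]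
    refine Finset.sum_congr rfl fun j _ => ?_
    by_cases h : (i : ℕ) < (j : ℕ)
    · simp only [h, if_true]
      exact iterZero14 hu hmb k
    · simp only [h, if_false]
  have hST : Set.EqOn S (fun y => (1 : ℝ) - T y) (Set.Icc a b) := by
    intro y hy
    have h1 : S y + T y = ∑ j : Fin (n + 1), B j y := by
      rw [hSdef, hTdef]
      simp only
      rw [← Finset.sum_add_distrib]
      refine Finset.sum_congr rfl fun j _ => ?_
      by_cases h : (i : ℕ) < (j : ℕ) <;> simp [h]
    have h2 := hnorm y hy
    rw [h2] at h1
    simp only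
    linarith
  have keySb : ∀ k : ℕ, 1 ≤ k → k ≤ n → iteratedDerivWithin k S (Set.Icc a b) b
      = -∑ j : Fin (n + 1),
          if (i : ℕ) < (j : ℕ) then 0 else iteratedDerivWithin k (B j) (Set.Icc a b) b := by
    intro k h1 hk
    rw [iteratedDerivWithin_congr hST hmb]
    rw [iteratedDerivWithin_const_sub h1 (1 : ℝ)]
    rw [iteratedDerivWithin_fun_neg T]
    rw [keyT k hk]
  refine ⟨?_, ?_, ?_, ?_⟩
  · -- zeros at a
    intro j hj
    rw [key j a hma, keyS (j + 1) (by omega) a hma]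
    refine Finset.sum_eq_zero fun m _ => ?_
    split_ifs with h
    · exact (ha m).1 _ (by omega)
    · rfl
  · -- nonzero at a
    rw [key i a hma, keyS ((i : ℕ) + 1) (by omega) a hma]
    rw [Finset.sum_eq_single i.succ]
    · have hcond : (i : ℕ) < (i.succ : ℕ) := by simp [Fin.val_succ]
      simp only [hcond, if_true]
      have := (ha i.succ).2
      rwa [Fin.val_succ] at this
    · intro m _ hne
      have hval : (m : ℕ) ≠ (i : ℕ) + 1 := by
        intro hc
        apply hne
        apply Fin.ext
        simpa [Fin.val_succ] using hc
      split_ifs with h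
      · exact (ha m).1 _ (by omega)
      · rfl
    · intro h
      exact absurd (Finset.mem_univ _) h
  · -- zeros at b
    intro j hj
    rw [key j b hmb, keySb (j + 1) (by omega) (by omega)]
    rw [neg_eq_zero]
    refine Finset.sum_eq_zero fun m _ => ?_
    split_ifs with h
    · rfl
    · have hm : (m : ℕ) ≤ (i : ℕ) := by omega
      exact (hb m).1 _ (by omega)
  · -- nonzero at b
    rw [key _ b hmb, keySb (n - 1 - (i : ℕ) + 1) (by omega) (by omega)]
    rw [neg_ne_zero]
    rw [Finset.sum_eq_single i.castSucc]
    · have hcond : ¬ ((i : ℕ) < (i.castSucc : ℕ)) := by simp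
      simp only [hcond, if_false]
      have heq : n - 1 - (i : ℕ) + 1 = n - (i.castSucc : ℕ) := by
        simp only [Fin.coe_castSucc]
        omega
      rw [heq]
      exact (hb i.castSucc).2
    · intro m _ hne
      have hval : (m : ℕ) ≠ (i : ℕ) := by
        intro hc
        apply hne
        apply Fin.ext
        simpa using hc
      split_ifs with h
      · rfl
      · have hm : (m : ℕ) < (i : ℕ) := by omega
        exact (hb m).1 _ (by omega)
    · intro h
      exact absurd (Finset.mem_univ _) h
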